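/- Let (ℋ, μ) be a linear classification problem. The collection 𝒮_𝒟(ℋ,μ) = {[p > 0] : p ∈ 𝒟(ℋ,μ)} of supports of decorrelating reweightings is closed under countable unions (up to sets of μ-measure zero): if C_i = [p_i > 0] with p_i ∈ 𝒟(ℋ,μ) for all i ∈ ℕ, then ⋃_i C_i = [p > 0] for some p ∈ 𝒟(ℋ,μ). -/

import Mathlib

open MeasureTheory ENNReal NNReal

theorem supports_closed_under_countable_unions
    {X : Type*} [MeasurableSpace X]
    (μ : Measure (X × ℝ)) [IsProbabilityMeasure μ]
    (n : ℕ) (h : Fin n → X → ℝ)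
    (hmeas : ∀ i, Measurable (h i)) (hbd : ∀ i x, |h i x| ≤ 1)
    (p : ℕ → X × ℝ → ℝ)
    (hpint : ∀ i, Integrable (p i) μ)
    (hpnn : ∀ i z, 0 ≤ p i z)
    (hdec : ∀ i, ∀ lam : Fin n → ℝ,
      ∫ z, z.2 * (∑ j, lam j * h j z.1) * p i z ∂μ = 0) :
    ∃ pinf : X × ℝ → ℝ,
      Integrable pinf μ ∧ (∀ z, 0 ≤ pinf z) ∧
      (∀ lam : Fin n → ℝ,
        ∫ z, z.2 * (∑ j, lam j * h j z.1) * pinf z ∂μ = 0) ∧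
      {z | 0 < pinf z} = ⋃ i, {z | 0 < p i z} := by
  classical
  set c : ℕ → ℝ := fun i => (1/2)^i / (1 + ∫ z, p i z ∂μ) with hc
  have hint_nn : ∀ i, 0 ≤ ∫ z, p i z ∂μ := fun i => integral_nonneg (hpnn i)
  have hden_pos : ∀ i, (0:ℝ) < 1 + ∫ z, p i z ∂μ := fun i => by linarith [hint_nn i]
  have hc_pos : ∀ i, 0 < c i := fun i => div_pos (by positivity) (hden_pos i)
  set f : ℕ → X × ℝ → ℝ := fun i z => c i * p i z with hfdef
  have hf_nn : ∀ i z, 0 ≤ f i z := fun i z => mul_nonneg (hc_pos i).le (hpnn i z)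
  have hf_int : ∀ i, Integrable (f i) μ := fun i => (hpint i).const_mul _
  have hf_meas : ∀ i, AEStronglyMeasurable (f i) μ := fun i => (hf_int i).1
  have hf_nnmeas : ∀ i, AEMeasurable (fun z => (‖f i z‖₊ : ℝ≥0∞)) μ :=
    fun i => (hf_meas i).enorm
  -- bound on the lintegrals of the f i
  have hlint : ∀ i, ∫⁻ z, ‖f i z‖₊ ∂μ ≤ ENNReal.ofReal ((1/2)^i) := by
    intro i
    have hoe : ENNReal.ofReal (∫ z, ‖f i z‖ ∂μ) = ∫⁻ z, (‖f i z‖₊ : ℝ≥0∞) ∂μ :=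
      ofReal_integral_norm_eq_lintegral_enorm (hf_int i)
    rw [← hoe]
    apply ENNReal.ofReal_le_ofReal
    have h1 : ∫ z, ‖f i z‖ ∂μ = c i * ∫ z, p i z ∂μ := by
      rw [← integral_const_mul]
      refine integral_congr_ae (Filter.Eventually.of_forall fun z => ?_)
      show ‖f i z‖ = c i * p i z
      rw [Real.norm_eq_abs, abs_of_nonneg (hf_nn i z)]
    rw [h1, hc]
    rw [div_mul_eq_mul_div, div_le_iff₀ (hden_pos i)]
    have hpow : (0:ℝ) < (1/2)^i := by positivity
    nlinarith [hint_nn i]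
  have hsum_lint : ∑' i, ∫⁻ z, ‖f i z‖₊ ∂μ ≠ ∞ := by
    refine ne_top_of_le_ne_top ?_ (ENNReal.tsum_le_tsum hlint)
    have : ∀ i : ℕ, ENNReal.ofReal ((1/2:ℝ)^i) = (ENNReal.ofReal (1/2))^i := fun i =>
      ENNReal.ofReal_pow (by norm_num : (0:ℝ) ≤ 1/2) i
    simp_rw [this]
    rw [ENNReal.tsum_geometric]
    rw [Ne, ENNReal.inv_eq_top]
    refine (tsub_pos_of_lt ?_).ne'
    rw [show (1:ℝ≥0∞) = ENNReal.ofReal 1 by simp]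
    exact ENNReal.ofReal_lt_ofReal_iff_of_nonneg (by norm_num) |>.mpr (by norm_num)
  -- a.e. summability
  have hsummae : ∀ᵐ z ∂μ, Summable fun i => f i z := by
    have h1 : ∫⁻ z, ∑' i, (‖f i z‖₊ : ℝ≥0∞) ∂μ ≠ ∞ := by
      rw [lintegral_tsum hf_nnmeas]; exact hsum_lint
    filter_upwards [ae_lt_top' (AEMeasurable.ennreal_tsum hf_nnmeas) h1] with z hz
    have hs : Summable fun i => ‖f i z‖₊ := ENNReal.tsum_coe_ne_top_iff_summable.mp hz.ne
    have : Summable fun i => ‖f i z‖ := by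
      have := NNReal.summable_coe.mpr hs
      simpa [coe_nnnorm] using this
    exact this.of_norm
  set pinf : X × ℝ → ℝ :=
    fun z => if Summable (fun i => f i z) then ∑' i, f i z else 1 with hpinfdef
  have hpinf_ae : pinf =ᵐ[μ] fun z => ∑' i, f i z :=
    hsummae.mono fun z hz => if_pos hz
  have hpinf_pos : ∀ z, Summable (fun i => f i z) → pinf z = ∑' i, f i z :=
    fun z hz => if_pos hz
  have hpinf_neg : ∀ z, ¬ Summable (fun i => f i z) → pinf z = 1 :=
    fun z hz => if_neg hz
  -- the tsum function, rewritten through ℝ≥0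
  have htsum_eq : ∀ z, (∑' i, f i z) = ((∑' i, ‖f i z‖₊ : ℝ≥0) : ℝ) := by
    intro z
    rw [NNReal.coe_tsum]
    refine tsum_congr fun i => ?_
    rw [coe_nnnorm, Real.norm_eq_abs, abs_of_nonneg (hf_nn i z)]
  have htsum_meas : AEStronglyMeasurable (fun z => ∑' i, f i z) μ := by
    have : AEMeasurable (fun z => ((∑' i, ‖f i z‖₊ : ℝ≥0) : ℝ)) μ :=
      (AEMeasurable.nnreal_tsum fun i => (hf_meas i).nnnorm.aemeasurable).coe_nnreal_real
    have h2 : AEMeasurable (fun z => ∑' i, f i z) μ := by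
      simpa [← htsum_eq] using this
    exact h2.aestronglyMeasurable
  have htsum_nnnorm : ∀ᵐ z ∂μ,
      (‖∑' i, f i z‖₊ : ℝ≥0∞) = ∑' i, (‖f i z‖₊ : ℝ≥0∞) := by
    filter_upwards [hsummae] with z hz
    have hs : Summable fun i => ‖f i z‖₊ := by
      rw [← NNReal.summable_coe]
      have : Summable fun i => ‖f i z‖ :=
        hz.congr fun i => by rw [Real.norm_eq_abs, abs_of_nonneg (hf_nn i z)]
      simpa [coe_nnnorm] using this
    rw [htsum_eq z, NNReal.nnnorm_eq, ENNReal.coe_tsum hs]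
  have htsum_int : Integrable (fun z => ∑' i, f i z) μ := by
    refine ⟨htsum_meas, ?_⟩
    show (∫⁻ z, (‖∑' i, f i z‖₊ : ℝ≥0∞) ∂μ) < ⊤
    rw [lintegral_congr_ae htsum_nnnorm, lintegral_tsum hf_nnmeas]
    exact hsum_lint.lt_top
  refine ⟨pinf, htsum_int.congr hpinf_ae.symm, ?_, ?_, ?_⟩
  · intro z
    by_cases hs : Summable (fun i => f i z)
    · rw [hpinf_pos z hs]; exact tsum_nonneg fun i => hf_nn i z
    · rw [hpinf_neg z hs]; norm_num
  · intro lam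
    set gfun : X × ℝ → ℝ := fun z => z.2 * (∑ j, lam j * h j z.1) with hgdef
    have hg_meas : Measurable gfun := by
      apply measurable_snd.mul
      exact Finset.measurable_sum _ fun j _ => ((hmeas j).comp measurable_fst).const_mul (lam j)
    by_cases hFi : Integrable (fun z => gfun z * pinf z) μ
    · have hGmeas : ∀ i, AEStronglyMeasurable (fun z => gfun z * f i z) μ :=
        fun i => hg_meas.aestronglyMeasurable.mul (hf_meas i)
      have hkey : ∑' i, ∫⁻ z, ‖gfun z * f i z‖₊ ∂μ ≠ ∞ := by
        have hlt : ∫⁻ z, ∑' i, (‖gfun z * f i z‖₊ : ℝ≥0∞) ∂μ = ∑' i, ∫⁻ z, (‖gfun z * f i z‖₊ : ℝ≥0∞) ∂μ :=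
          lintegral_tsum fun i => (hGmeas i).enorm
        rw [← hlt]
        have heq : ∀ᵐ z ∂μ, ∑' i, (‖gfun z * f i z‖₊ : ℝ≥0∞)
            = (‖gfun z * pinf z‖₊ : ℝ≥0∞) := by
          filter_upwards [hsummae, hpinf_ae] with z hz hpz
          simp_rw [nnnorm_mul, ENNReal.coe_mul, ENNReal.tsum_mul_left]
          rw [hpz]
          have := htsum_nnnorm
          congr 1
          have hs : Summable fun i => ‖f i z‖₊ := by
            rw [← NNReal.summable_coe]
            have : Summable fun i => ‖f i z‖ :=
              hz.congr fun i => by rw [Real.norm_eq_abs, abs_of_nonneg (hf_nn i z)]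
            simpa [coe_nnnorm] using this
          rw [htsum_eq z, NNReal.nnnorm_eq, ENNReal.coe_tsum hs]
        rw [lintegral_congr_ae heq]
        exact hFi.2.lt_top.ne
      have hcalc : ∫ z, gfun z * pinf z ∂μ = 0 := by
        calc ∫ z, gfun z * pinf z ∂μ
            = ∫ z, gfun z * (∑' i, f i z) ∂μ :=
              integral_congr_ae (hpinf_ae.mono fun z hz => by dsimp only; rw [hz])
          _ = ∫ z, ∑' i, gfun z * f i z ∂μ := by
              refine integral_congr_ae (Filter.Eventually.of_forall fun z => ?_)
              show gfun z * (∑' i, f i z) = ∑' i, gfun z * f i z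
              rw [_root_.tsum_mul_left]
          _ = ∑' i, ∫ z, gfun z * f i z ∂μ := integral_tsum hGmeas hkey
          _ = 0 := by
              have hzero : ∀ i, ∫ z, gfun z * f i z ∂μ = 0 := by
                intro i
                have h0 := hdec i lam
                have hfun : (fun z => gfun z * f i z)
                    = fun z => c i * (z.2 * (∑ j, lam j * h j z.1) * p i z) := by
                  funext z; rw [hgdef, hfdef]; ring
                rw [hfun, integral_const_mul, h0, mul_zero]
              simp [hzero]
      exact hcalc
    · exact integral_undef hFi
  · ext z
    simp only [Set.mem_setOf_eq, Set.mem_iUnion]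
    constructor
    · intro hz
      by_cases hs : Summable (fun i => f i z)
      · rw [show (0 < pinf z) = (0 < ∑' i, f i z) from by rw [hpinf_pos z hs]] at hz
        by_contra hno
        push_neg at hno
        have hall : ∀ i, f i z = 0 := fun i => by
          have : p i z = 0 := le_antisymm (hno i) (hpnn i z)
          simp [hfdef, this]
        rw [tsum_congr hall] at hz
        simp at hz
      · by_contra hno
        push_neg at hno
        have hall : ∀ i, f i z = 0 := fun i => by
          have : p i z = 0 := le_antisymm (hno i) (hpnn i z)
          simp [hfdef, this]
        exact hs (by rw [show (fun i => f i z) = fun _ => (0:ℝ) from funext hall]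
                     exact summable_zero)
    · rintro ⟨i, hi⟩
      by_cases hs : Summable (fun i => f i z)
      · show 0 < pinf z
        rw [hpinf_pos z hs]
        have hfi : 0 < f i z := mul_pos (hc_pos i) hi
        exact lt_of_lt_of_le hfi (hs.le_tsum i fun j _ => hf_nn j z)
      · show 0 < pinf z
        rw [hpinf_neg z hs]
        norm_num
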